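/- Let f : ℝⁿ → ℝ be C² on the open ball B(x⁰, Δ̄), let T = [t¹ … tᵏ] ∈ ℝ^{n×k} have full row rank n with max_j ‖tʲ‖ = Δ_T < Δ̄, and let L be a Lipschitz constant for ∇f on B(x⁰, Δ̄). Then ‖(Tᵀ)† δ_f(x⁰;T) − ∇f(x⁰)‖ ≤ (√k/2) · L · ‖(T̂ᵀ)†‖ · Δ_T, where T̂ = T/Δ_T and δ_f(x⁰;T) ∈ ℝᵏ has j-th entry f(x⁰+tʲ) − f(x⁰). -/

import Mathlib

set_option maxHeartbeats 1000000

open Matrix Metric intervalIntegral MeasureTheory RealInnerProductSpace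

lemma quad_taylor {F : Type*} [NormedAddCommGroup F] [InnerProductSpace ℝ F] [CompleteSpace F]
    {f : F → ℝ} {x v : F} {L R : ℝ}
    (hdiff : ∀ y ∈ ball x R, DifferentiableAt ℝ f y)
    (hLip : ∀ y ∈ ball x R, ∀ z ∈ ball x R,
      ‖gradient f y - gradient f z‖ ≤ L * ‖y - z‖)
    (hv : ‖v‖ < R) :
    |f (x + v) - f x - ⟪gradient f x, v⟫| ≤ L / 2 * ‖v‖ ^ 2 := by
  have hmem : ∀ s : ℝ, s ∈ Set.uIcc (0:ℝ) 1 → x + s • v ∈ ball x R := by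
    intro s hs
    rw [Set.uIcc_of_le zero_le_one] at hs
    rw [mem_ball_iff_norm]
    have : ‖x + s • v - x‖ = |s| * ‖v‖ := by
      rw [add_sub_cancel_left, norm_smul, Real.norm_eq_abs]
    rw [this]
    have hs1 : |s| ≤ 1 := abs_le.2 ⟨by linarith [hs.1], hs.2⟩
    calc |s| * ‖v‖ ≤ 1 * ‖v‖ := by
          exact mul_le_mul_of_nonneg_right hs1 (norm_nonneg v)
      _ = ‖v‖ := one_mul _
      _ < R := hv
  set B : ℝ → ℝ := fun s => ⟪gradient f (x + s • v), v⟫ with hBdef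
  have hderiv : ∀ s ∈ Set.uIcc (0:ℝ) 1, HasDerivAt (fun s : ℝ => f (x + s • v)) (B s) s := by
    intro s hs
    have h1 : HasDerivAt (fun s : ℝ => x + s • v) v s := by
      simpa using ((hasDerivAt_id s).smul_const v).const_add x
    have h2 := (hdiff _ (hmem s hs)).hasGradientAt
    have h3 := h2.hasFDerivAt.comp_hasDerivAt s h1
    simp only [InnerProductSpace.toDual_apply_apply] at h3; exact h3
  have hdist : ∀ s ∈ Set.uIcc (0:ℝ) 1, ∀ τ ∈ Set.uIcc (0:ℝ) 1,
      |B s - B τ| ≤ L * ‖v‖ ^ 2 * |s - τ| := by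
    intro s hs τ hτ
    have h := hLip _ (hmem s hs) _ (hmem τ hτ)
    have hd : (x + s • v) - (x + τ • v) = (s - τ) • v := by
      rw [add_sub_add_left_eq_sub, sub_smul]
    calc |B s - B τ| = |⟪gradient f (x + s • v) - gradient f (x + τ • v), v⟫| := by
          rw [inner_sub_left]
      _ ≤ ‖gradient f (x + s • v) - gradient f (x + τ • v)‖ * ‖v‖ :=
          abs_real_inner_le_norm _ _
      _ ≤ (L * ‖(x + s • v) - (x + τ • v)‖) * ‖v‖ :=
          mul_le_mul_of_nonneg_right h (norm_nonneg v)
      _ = L * ‖v‖ ^ 2 * |s - τ| := by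
          rw [hd, norm_smul, Real.norm_eq_abs]; ring
  have hBlip : LipschitzOnWith (L * ‖v‖ ^ 2).toNNReal B (Set.uIcc (0:ℝ) 1) := by
    rw [lipschitzOnWith_iff_dist_le_mul]
    intro s hs τ hτ
    rw [Real.dist_eq, Real.dist_eq]
    calc |B s - B τ| ≤ L * ‖v‖ ^ 2 * |s - τ| := hdist s hs τ hτ
      _ ≤ (L * ‖v‖ ^ 2).toNNReal * |s - τ| :=
          mul_le_mul_of_nonneg_right (Real.le_coe_toNNReal _) (abs_nonneg _)
  have hBint : IntervalIntegrable B volume 0 1 := hBlip.continuousOn.intervalIntegrable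
  have key : ∫ s in (0:ℝ)..1, B s = f (x + v) - f x := by
    have := intervalIntegral.integral_eq_sub_of_hasDerivAt hderiv hBint
    simpa using this
  have hB0 : B 0 = ⟪gradient f x, v⟫ := by simp [hBdef]
  have key2 : f (x + v) - f x - ⟪gradient f x, v⟫ = ∫ s in (0:ℝ)..1, (B s - B 0) := by
    rw [intervalIntegral.integral_sub hBint intervalIntegrable_const, key,
      intervalIntegral.integral_const, hB0]
    simp
  rcases eq_or_ne v 0 with hv0 | hv0
  · simp [hv0]
  have hLpos : 0 ≤ L := by
    have hxmem : x ∈ ball x R := mem_ball_self (lt_of_le_of_lt (norm_nonneg v) hv)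
    have hxv : x + v ∈ ball x R := by
      rw [mem_ball_iff_norm, add_sub_cancel_left]; exact hv
    have h := hLip _ hxv _ hxmem
    have h2 : (0:ℝ) ≤ L * ‖x + v - x‖ := le_trans (norm_nonneg _) h
    rw [add_sub_cancel_left] at h2
    have := norm_pos_iff.2 hv0
    nlinarith
  rw [key2]
  have hint2 : ∫ s in (0:ℝ)..1, (L * ‖v‖ ^ 2) * s = L / 2 * ‖v‖ ^ 2 := by
    rw [intervalIntegral.integral_const_mul, integral_id]; ring
  have habs : |∫ s in (0:ℝ)..1, (B s - B 0)| ≤ |∫ s in (0:ℝ)..1, (L * ‖v‖ ^ 2) * s| := by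
    rw [← Real.norm_eq_abs (∫ s in (0:ℝ)..1, (B s - B 0))]
    apply intervalIntegral.norm_integral_le_abs_of_norm_le
    · filter_upwards [ae_restrict_mem measurableSet_uIoc] with s hs
      rw [Real.norm_eq_abs]
      have hs' : s ∈ Set.uIcc (0:ℝ) 1 := Set.uIoc_subset_uIcc hs
      have h0 : (0:ℝ) ∈ Set.uIcc (0:ℝ) 1 := Set.left_mem_uIcc
      have := hdist s hs' 0 h0
      have hspos : 0 ≤ s := by
        rw [Set.uIoc_of_le zero_le_one] at hs
        exact le_of_lt hs.1
      calc |B s - B 0| ≤ L * ‖v‖ ^ 2 * |s - 0| := this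
        _ = L * ‖v‖ ^ 2 * s := by rw [sub_zero, abs_of_nonneg hspos]
    · exact (continuous_const.mul continuous_id).intervalIntegrable _ _
  calc |∫ s in (0:ℝ)..1, (B s - B 0)| ≤ |∫ s in (0:ℝ)..1, (L * ‖v‖ ^ 2) * s| := habs
    _ = L / 2 * ‖v‖ ^ 2 := by
        rw [hint2, abs_of_nonneg (by positivity)]

/-- The induced 2-norm (operator norm) of a matrix, viewed as a linear map
between Euclidean spaces. -/
noncomputable def opNorm {m n : ℕ} (A : Matrix (Fin m) (Fin n) ℝ) : ℝ :=
  ‖LinearMap.toContinuousLinearMap (Matrix.toEuclideanLin A)‖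

/-- error bound for the generalized simplex gradient.
Here T has full row rank n, so (Tᵀ)† = (T Tᵀ)⁻¹ T. -/
theorem generalized_simplex_gradient_error_bound {n k : ℕ}
    (f : EuclideanSpace ℝ (Fin n) → ℝ) (x0 : EuclideanSpace ℝ (Fin n))
    (Δbar ΔT L : ℝ)
    (t : Fin k → EuclideanSpace ℝ (Fin n))
    (T : Matrix (Fin n) (Fin k) ℝ) (hTdef : T = Matrix.of fun i j => t j i)
    (hrank : T.rank = n)
    (hΔT : IsGreatest (Set.range fun j => ‖t j‖) ΔT)
    (hΔTbar : ΔT < Δbar)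
    (hf : ContDiffOn ℝ 2 f (ball x0 Δbar))
    (hLip : ∀ y ∈ ball x0 Δbar, ∀ z ∈ ball x0 Δbar,
      ‖gradient f y - gradient f z‖ ≤ L * ‖y - z‖) :
    ‖(WithLp.equiv 2 (Fin n → ℝ)).symm
        (((T * Tᵀ)⁻¹ * T).mulVec fun j => f (x0 + t j) - f x0)
      - gradient f x0‖
      ≤ Real.sqrt k / 2 * L *
        opNorm (((ΔT⁻¹ • T) * (ΔT⁻¹ • T)ᵀ)⁻¹ * (ΔT⁻¹ • T)) * ΔT := by
  -- ΔT basic facts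
  obtain ⟨⟨j0, hj0⟩, hub⟩ := hΔT
  have hΔTnn : 0 ≤ ΔT := hj0 ▸ norm_nonneg _
  rcases Nat.eq_zero_or_pos n with hn | hn
  · -- degenerate case n = 0
    subst hn
    haveI : Subsingleton (EuclideanSpace ℝ (Fin 0)) :=
      (WithLp.equiv 2 (Fin 0 → ℝ)).subsingleton
    have h1 : opNorm (((ΔT⁻¹ • T) * (ΔT⁻¹ • T)ᵀ)⁻¹ * (ΔT⁻¹ • T)) = 0 := by
      unfold opNorm
      rw [Subsingleton.elim (LinearMap.toContinuousLinearMap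
        (Matrix.toEuclideanLin (((ΔT⁻¹ • T) * (ΔT⁻¹ • T)ᵀ)⁻¹ * (ΔT⁻¹ • T)))) 0, norm_zero]
    rw [h1, Subsingleton.elim ((WithLp.equiv 2 (Fin 0 → ℝ)).symm
        (((T * Tᵀ)⁻¹ * T).mulVec fun j => f (x0 + t j) - f x0) - gradient f x0) 0]
    simp
  -- main case
  have hΔbar : (0:ℝ) < Δbar := lt_of_le_of_lt hΔTnn hΔTbar
  -- L is nonnegative
  have hLnn : (0:ℝ) ≤ L := by
    set w : EuclideanSpace ℝ (Fin n) :=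
      (Δbar / 2) • EuclideanSpace.single ⟨0, hn⟩ (1:ℝ) with hw
    have hwnorm : ‖w‖ = Δbar / 2 := by
      rw [hw, norm_smul, EuclideanSpace.norm_single, Real.norm_eq_abs, norm_one, mul_one,
        abs_of_pos (by linarith)]
    have hmem : x0 + w ∈ ball x0 Δbar := by
      rw [mem_ball_iff_norm, add_sub_cancel_left, hwnorm]; linarith
    have h := hLip _ hmem _ (mem_ball_self hΔbar)
    rw [add_sub_cancel_left, hwnorm] at h
    nlinarith [norm_nonneg (gradient f (x0 + w) - gradient f x0)]
  -- ΔT is positive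
  have hΔTpos : (0:ℝ) < ΔT := by
    rcases lt_or_eq_of_le hΔTnn with h | h
    · exact h
    · exfalso
      have hT0 : T = 0 := by
        rw [hTdef]; ext i j
        have h1 : ‖t j‖ ≤ ΔT := hub ⟨j, rfl⟩
        rw [← h] at h1
        have htj : t j = 0 := norm_eq_zero.1 (le_antisymm h1 (norm_nonneg _))
        show t j i = 0
        rw [htj]; rfl
      rw [hT0, Matrix.rank_zero] at hrank
      omega
  -- invertibility of T * Tᵀ
  have hdet : IsUnit (T * Tᵀ).det := by
    have hrankS : (T * Tᵀ).rank = n := by rw [Matrix.rank_self_mul_transpose, hrank]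
    have htop : LinearMap.range (T * Tᵀ).mulVecLin = ⊤ := by
      apply Submodule.eq_top_of_finrank_eq
      rw [← Matrix.rank, hrankS, Module.finrank_fintype_fun_eq_card, Fintype.card_fin]
    have hsurj : Function.Surjective (T * Tᵀ).mulVec := by
      intro v
      obtain ⟨w, hw⟩ := (LinearMap.range_eq_top.1 htop) v
      exact ⟨w, hw⟩
    exact (Matrix.isUnit_iff_isUnit_det _).1 (Matrix.mulVec_surjective_iff_isUnit.1 hsurj)
  set A : Matrix (Fin n) (Fin k) ℝ := (T * Tᵀ)⁻¹ * T with hA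
  have hATt : A * Tᵀ = 1 := by
    rw [hA, Matrix.mul_assoc, Matrix.nonsing_inv_mul _ hdet]
  -- differentiability
  have hdiff : ∀ y ∈ ball x0 Δbar, DifferentiableAt ℝ f y := by
    intro y hy
    exact ((hf.differentiableOn (by norm_num)).differentiableAt (isOpen_ball.mem_nhds hy))
  -- error vector
  set g : EuclideanSpace ℝ (Fin n) := gradient f x0 with hg
  set gv : Fin n → ℝ := WithLp.equiv 2 (Fin n → ℝ) g with hgv
  set δ : Fin k → ℝ := fun j => f (x0 + t j) - f x0 with hδ
  set e : Fin k → ℝ := δ - Tᵀ.mulVec gv with he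
  have hvec : (WithLp.equiv 2 (Fin n → ℝ)).symm (A.mulVec δ) - g
      = (WithLp.equiv 2 (Fin n → ℝ)).symm (A.mulVec e) := by
    have h1 : A.mulVec (Tᵀ.mulVec gv) = gv := by
      rw [Matrix.mulVec_mulVec, hATt, Matrix.one_mulVec]
    rw [he, Matrix.mulVec_sub, h1]
    have : g = (WithLp.equiv 2 (Fin n → ℝ)).symm gv := by
      rw [hgv, Equiv.symm_apply_apply]
    rw [this]; rfl
  -- entrywise bound
  have hent : ∀ j, |e j| ≤ L / 2 * ΔT ^ 2 := by
    intro j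
    have hgvi : ∀ i, gv i = g i := fun i => rfl
    have hej : e j = f (x0 + t j) - f x0 - ⟪g, t j⟫ := by
      have h1 : e j = (f (x0 + t j) - f x0) - ∑ i, t j i * gv i := by
        simp [he, hδ, Matrix.mulVec, dotProduct, hTdef]
      rw [h1, PiLp.inner_apply]
      simp only [RCLike.inner_apply, conj_trivial]
      congr 1
    rw [hej]
    have htj : ‖t j‖ < Δbar := lt_of_le_of_lt (hub ⟨j, rfl⟩) hΔTbar
    calc |f (x0 + t j) - f x0 - ⟪g, t j⟫| ≤ L / 2 * ‖t j‖ ^ 2 :=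
          quad_taylor hdiff hLip htj
      _ ≤ L / 2 * ΔT ^ 2 := by
          have : ‖t j‖ ≤ ΔT := hub ⟨j, rfl⟩
          have h2 : ‖t j‖ ^ 2 ≤ ΔT ^ 2 := by nlinarith [norm_nonneg (t j)]
          nlinarith
  -- norm of e
  have henorm : ‖(WithLp.equiv 2 (Fin k → ℝ)).symm e‖ ≤ Real.sqrt k * (L / 2 * ΔT ^ 2) := by
    have hnormeq : ‖(WithLp.equiv 2 (Fin k → ℝ)).symm e‖ = Real.sqrt (∑ j, |e j| ^ 2) := by
      rw [EuclideanSpace.norm_eq]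
      congr 1
    rw [hnormeq]
    have h1 : ∑ j, |e j| ^ 2 ≤ (k : ℝ) * (L / 2 * ΔT ^ 2) ^ 2 := by
      calc ∑ j, |e j| ^ 2
          ≤ ∑ _j : Fin k, (L / 2 * ΔT ^ 2) ^ 2 := by
            refine Finset.sum_le_sum fun j _ => ?_
            have := hent j
            nlinarith [abs_nonneg (e j)]
        _ = (k : ℝ) * (L / 2 * ΔT ^ 2) ^ 2 := by
            rw [Finset.sum_const, Finset.card_univ, Fintype.card_fin, nsmul_eq_mul]
    calc Real.sqrt (∑ j, |e j| ^ 2)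
        ≤ Real.sqrt ((k : ℝ) * (L / 2 * ΔT ^ 2) ^ 2) := Real.sqrt_le_sqrt h1
      _ = Real.sqrt k * (L / 2 * ΔT ^ 2) := by
          rw [Real.sqrt_mul (Nat.cast_nonneg k), Real.sqrt_sq (by positivity)]
  -- operator norm bound
  have hop : ‖(WithLp.equiv 2 (Fin n → ℝ)).symm (A.mulVec e)‖
      ≤ opNorm A * ‖(WithLp.equiv 2 (Fin k → ℝ)).symm e‖ := by
    have h1 : (WithLp.equiv 2 (Fin n → ℝ)).symm (A.mulVec e)
        = LinearMap.toContinuousLinearMap (Matrix.toEuclideanLin A)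
            ((WithLp.equiv 2 (Fin k → ℝ)).symm e) := by
      rw [LinearMap.coe_toContinuousLinearMap']; rfl
    rw [h1]
    exact (LinearMap.toContinuousLinearMap (Matrix.toEuclideanLin A)).le_opNorm _
  -- scaling of the operator norm
  have hscale : opNorm (((ΔT⁻¹ • T) * (ΔT⁻¹ • T)ᵀ)⁻¹ * (ΔT⁻¹ • T)) = ΔT * opNorm A := by
    have hc : ΔT⁻¹ ≠ 0 := inv_ne_zero (ne_of_gt hΔTpos)
    haveI : Invertible (ΔT⁻¹ * ΔT⁻¹) := invertibleOfNonzero (mul_ne_zero hc hc)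
    have h1 : (ΔT⁻¹ • T) * (ΔT⁻¹ • T)ᵀ = (ΔT⁻¹ * ΔT⁻¹) • (T * Tᵀ) := by
      rw [Matrix.transpose_smul, Matrix.smul_mul, Matrix.mul_smul, smul_smul]
    have h2 : ((ΔT⁻¹ • T) * (ΔT⁻¹ • T)ᵀ)⁻¹ * (ΔT⁻¹ • T) = ΔT • A := by
      have h2' : ((ΔT⁻¹ * ΔT⁻¹) • (T * Tᵀ))⁻¹ = (ΔT⁻¹ * ΔT⁻¹)⁻¹ • (T * Tᵀ)⁻¹ := by
        apply Matrix.inv_eq_left_inv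
        rw [Matrix.smul_mul, Matrix.mul_smul, smul_smul, Matrix.nonsing_inv_mul _ hdet,
          inv_mul_cancel₀ (mul_ne_zero hc hc), one_smul]
      rw [h1, h2', hA, Matrix.smul_mul, Matrix.mul_smul, smul_smul]
      congr 1
      field_simp
    rw [h2]
    unfold opNorm
    have h3 : Matrix.toEuclideanLin (ΔT • A) = ΔT • Matrix.toEuclideanLin A :=
      _root_.map_smul (Matrix.toEuclideanLin (𝕜 := ℝ)) ΔT A
    rw [h3, _root_.map_smul,
      norm_smul ΔT (LinearMap.toContinuousLinearMap (Matrix.toEuclideanLin A)),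
      Real.norm_eq_abs, abs_of_pos hΔTpos]
  -- conclusion
  rw [hscale]
  calc ‖(WithLp.equiv 2 (Fin n → ℝ)).symm (A.mulVec δ) - g‖
      = ‖(WithLp.equiv 2 (Fin n → ℝ)).symm (A.mulVec e)‖ := by rw [hvec]
    _ ≤ opNorm A * ‖(WithLp.equiv 2 (Fin k → ℝ)).symm e‖ := hop
    _ ≤ opNorm A * (Real.sqrt k * (L / 2 * ΔT ^ 2)) := by
        apply mul_le_mul_of_nonneg_left henorm (norm_nonneg _)
    _ = Real.sqrt k / 2 * L * (ΔT * opNorm A) * ΔT := by ring
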